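/- The shifted-Fermat-number constant F := Σ_{n=0}^∞ (−1)^n / (2^{2^n} − 1) = 1 − 1/3 + 1/15 − 1/255 + ⋯ is irrational. -/

import Mathlib

open Finset Filter Topology

private noncomputable def fermA (n : ℕ) : ℝ := ((2 : ℝ) ^ (2 ^ n) - 1)⁻¹

private lemma one_lt_fermPow (n : ℕ) : (1:ℝ) < (2 : ℝ) ^ (2 ^ n) := by
  calc (1:ℝ) < 2 := one_lt_two
  _ = 2 ^ 1 := (pow_one 2).symm
  _ ≤ 2 ^ (2^n) := pow_le_pow_right₀ one_le_two Nat.one_le_two_pow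

private lemma fermA_pos (n : ℕ) : 0 < fermA n := by
  have := one_lt_fermPow n
  have : (0:ℝ) < (2 : ℝ) ^ (2 ^ n) - 1 := by linarith
  exact inv_pos.mpr this

private lemma fermA_strictAnti : StrictAnti fermA := by
  intro m n h
  have hm : (0:ℝ) < (2 : ℝ) ^ (2 ^ m) - 1 := by have := one_lt_fermPow m; linarith
  have h2 : (2:ℝ) ^ (2 ^ m) < (2:ℝ) ^ (2 ^ n) := by
    have : (2:ℕ) ^ m < 2 ^ n := Nat.pow_lt_pow_right (by norm_num) h
    exact pow_lt_pow_right₀ (by norm_num) this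
  show ((2:ℝ) ^ (2 ^ n) - 1)⁻¹ < ((2:ℝ) ^ (2 ^ m) - 1)⁻¹
  exact inv_strictAnti₀ hm (by linarith)

private lemma fermA_le_geom (n : ℕ) : fermA n ≤ (2:ℝ)⁻¹ ^ n := by
  have h : (2:ℕ) ^ n + 1 ≤ 2 ^ (2 ^ n) :=
    Nat.succ_le_of_lt (Nat.pow_lt_pow_right (by norm_num) (Nat.lt_two_pow_self (n := n)))
  have h' : (2:ℝ) ^ n ≤ (2:ℝ) ^ (2 ^ n) - 1 := by
    have := (Nat.cast_le (α := ℝ)).mpr h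
    push_cast at this; linarith
  have hp : (0:ℝ) < (2:ℝ) ^ n := by positivity
  calc fermA n ≤ ((2:ℝ) ^ n)⁻¹ := inv_anti₀ hp h'
  _ = (2:ℝ)⁻¹ ^ n := by rw [inv_pow]

private lemma summable_ferm : Summable (fun n : ℕ => (-1 : ℝ) ^ n * fermA n) := by
  apply Summable.of_abs
  have : ∀ n : ℕ, |(-1 : ℝ) ^ n * fermA n| = fermA n := by
    intro n
    rw [abs_mul, abs_pow, abs_neg, abs_one, one_pow, one_mul,
      abs_of_pos (fermA_pos n)]
  rw [funext this]
  apply Summable.of_nonneg_of_le (fun n => (fermA_pos n).le) fermA_le_geom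
  exact summable_geometric_of_lt_one (by norm_num) (by norm_num)

theorem stmt_4 :
    Irrational (∑' n : ℕ, (-1 : ℝ) ^ n / ((2 : ℝ) ^ (2 ^ n) - 1)) := by
  have hrw : (fun n : ℕ => (-1 : ℝ) ^ n / ((2 : ℝ) ^ (2 ^ n) - 1))
      = fun n : ℕ => (-1 : ℝ) ^ n * fermA n := by
    funext n; rw [div_eq_mul_inv]; rfl
  rw [hrw]
  set l := ∑' n : ℕ, (-1 : ℝ) ^ n * fermA n with hldef
  have hl : Tendsto (fun n => ∑ i ∈ range n, (-1 : ℝ) ^ i * fermA i) atTop (𝓝 l) :=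
    summable_ferm.hasSum.tendsto_sum_nat
  have hupper : ∀ k : ℕ, l ≤ ∑ i ∈ range (2 * k + 1), (-1 : ℝ) ^ i * fermA i :=
    fermA_strictAnti.antitone.tendsto_le_alternating_series hl
  have hlower : ∀ k : ℕ, ∑ i ∈ range (2 * k), (-1 : ℝ) ^ i * fermA i ≤ l :=
    fermA_strictAnti.antitone.alternating_series_le_tendsto hl
  rintro ⟨q, hq⟩
  -- choose k large
  set k : ℕ := q.den with hkdef
  set S : ℝ := ∑ i ∈ range (2 * k + 1), (-1 : ℝ) ^ i * fermA i with hSdef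
  -- strict upper bound : l < S
  have hstrict : l < S := by
    have h1 : l ≤ ∑ i ∈ range (2 * (k + 1) + 1), (-1 : ℝ) ^ i * fermA i := hupper (k + 1)
    have h2 : ∑ i ∈ range (2 * (k + 1) + 1), (-1 : ℝ) ^ i * fermA i
        = S - fermA (2 * k + 1) + fermA (2 * k + 2) := by
      have e : 2 * (k + 1) + 1 = (2 * k + 1) + 1 + 1 := by ring
      rw [e, sum_range_succ, sum_range_succ]
      have o1 : (-1 : ℝ) ^ (2 * k + 1) = -1 := Odd.neg_one_pow ⟨k, by ring⟩
      have o2 : (-1 : ℝ) ^ (2 * k + 1 + 1) = 1 := Even.neg_one_pow ⟨k + 1, by ring⟩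
      rw [o1, o2]; ring
    have h3 : fermA (2 * k + 2) < fermA (2 * k + 1) :=
      fermA_strictAnti (by omega)
    calc l ≤ S - fermA (2 * k + 1) + fermA (2 * k + 2) := h2 ▸ h1
    _ < S := by linarith
  -- lower bound : S - l ≤ fermA (2k+1)
  have htail : S - l ≤ fermA (2 * k + 1) := by
    have h1 : ∑ i ∈ range (2 * (k + 1)), (-1 : ℝ) ^ i * fermA i ≤ l := hlower (k + 1)
    have h2 : ∑ i ∈ range (2 * (k + 1)), (-1 : ℝ) ^ i * fermA i
        = S - fermA (2 * k + 1) := by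
      have e : 2 * (k + 1) = (2 * k + 1) + 1 := by ring
      rw [e, sum_range_succ]
      have o1 : (-1 : ℝ) ^ (2 * k + 1) = -1 := Odd.neg_one_pow ⟨k, by ring⟩
      rw [o1]; ring
    linarith [h2 ▸ h1]
  -- the common denominator
  set D : ℕ := 2 ^ (2 ^ (2 * k)) - 1 with hDdef
  have hDdvd : ∀ i : ℕ, i ≤ 2 * k → (2 ^ (2 ^ i) - 1 : ℕ) ∣ D := by
    intro i hi
    have : (2 ^ (2 ^ i) : ℕ) ^ (2 ^ (2 * k - i)) = 2 ^ (2 ^ (2 * k)) := by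
      rw [← pow_mul, ← pow_add]
      congr 2
      omega
    calc (2 ^ (2 ^ i) - 1 : ℕ) ∣ (2 ^ (2 ^ i) : ℕ) ^ (2 ^ (2 * k - i)) - 1 ^ (2 ^ (2 * k - i)) :=
          Nat.sub_dvd_pow_sub_pow _ _ _
    _ = D := by rw [this, one_pow]
  have hDcast : (D : ℝ) = (2:ℝ) ^ (2 ^ (2 * k)) - 1 := by
    rw [hDdef]
    push_cast [Nat.one_le_two_pow]
    ring
  have hDpos : (0:ℝ) < (D : ℝ) := by
    rw [hDcast]; have := one_lt_fermPow (2 * k); linarith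
  -- D * S is an integer
  set z : ℤ := ∑ i ∈ range (2 * k + 1), (-1 : ℤ) ^ i * (D / (2 ^ (2 ^ i) - 1) : ℕ) with hzdef
  have hzS : (z : ℝ) = (D : ℝ) * S := by
    rw [hzdef, hSdef, Int.cast_sum, mul_sum]
    apply Finset.sum_congr rfl
    intro i hi
    have hi' : i ≤ 2 * k := by simp [Finset.mem_range] at hi; omega
    have hne : ((2 ^ (2 ^ i) - 1 : ℕ) : ℝ) ≠ 0 := by
      have h1 : (1:ℕ) ≤ 2 ^ (2 ^ i) := Nat.one_le_two_pow
      have : ((2 ^ (2 ^ i) - 1 : ℕ) : ℝ) = (2:ℝ) ^ (2 ^ i) - 1 := by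
        push_cast [h1]; ring
      rw [this]
      have := one_lt_fermPow i; linarith
    have hcd : ((D / (2 ^ (2 ^ i) - 1) : ℕ) : ℝ)
        = (D : ℝ) / ((2 ^ (2 ^ i) - 1 : ℕ) : ℝ) := Nat.cast_div (hDdvd i hi') hne
    have hcast : ((2 ^ (2 ^ i) - 1 : ℕ) : ℝ) = (2:ℝ) ^ (2 ^ i) - 1 := by
      push_cast [Nat.one_le_two_pow]; ring
    rw [Int.cast_mul, Int.cast_pow, Int.cast_neg, Int.cast_one, Int.cast_natCast,
      hcd, hcast]
    simp only [fermA]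
    rw [div_eq_mul_inv]
    ring
  -- q.den * l = q.num
  have hden : ((q.den : ℝ)) ≠ 0 := Nat.cast_ne_zero.mpr q.den_nz
  have hnum : (q.num : ℝ) = (q.den : ℝ) * l := by
    rw [← hq, Rat.cast_def]
    field_simp
  -- the magic integer
  set m : ℤ := (q.den : ℤ) * z - q.num * D with hmdef
  have hmR : (m : ℝ) = (q.den : ℝ) * (D : ℝ) * (S - l) := by
    rw [hmdef]
    push_cast
    rw [hzS, hnum]
    ring
  have hdenpos : (0:ℝ) < (q.den : ℝ) := by
    exact_mod_cast q.pos
  have hmpos : (0:ℝ) < (m : ℝ) := by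
    rw [hmR]
    have : 0 < S - l := by linarith
    positivity
  have hmlt : (m : ℝ) < 1 := by
    rw [hmR]
    have hb : (q.den : ℝ) * (D : ℝ) * (S - l) ≤ (q.den : ℝ) * (D : ℝ) * fermA (2 * k + 1) := by
      apply mul_le_mul_of_nonneg_left htail
      positivity
    refine lt_of_le_of_lt hb ?_
    -- q.den * (x - 1) / (x^2 - 1) = q.den / (x+1) < 1
    set x : ℝ := (2:ℝ) ^ (2 ^ (2 * k)) with hxdef
    have hx1 : (1:ℝ) < x := one_lt_fermPow (2 * k)
    have hsq : (2:ℝ) ^ (2 ^ (2 * k + 1)) = x ^ 2 := by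
      rw [hxdef, ← pow_mul, pow_succ]
    have hfa : fermA (2 * k + 1) = (x ^ 2 - 1)⁻¹ := by
      rw [fermA, hsq]
    have hx2pos : (0:ℝ) < x ^ 2 - 1 := by nlinarith
    rw [hfa, hDcast]
    rw [mul_inv_lt_iff₀ hx2pos, one_mul]
    have hqx : (q.den : ℝ) < x + 1 := by
      have h1 : (q.den : ℕ) < 2 ^ (2 ^ (2 * k)) := by
        calc q.den < 2 ^ q.den := Nat.lt_two_pow_self (n := q.den)
        _ ≤ 2 ^ (2 ^ (2 * k)) := by
            apply Nat.pow_le_pow_right (by norm_num)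
            show k ≤ 2 ^ (2 * k)
            calc k ≤ 2 * k := by omega
            _ ≤ 2 ^ (2 * k) := Nat.le_of_lt Nat.lt_two_pow_self
      have : (q.den : ℝ) < x := by
        rw [hxdef]; exact_mod_cast h1
      linarith
    nlinarith
  -- contradiction : integer strictly between 0 and 1
  have h1 : (1:ℤ) ≤ m := by exact_mod_cast hmpos
  have h2 : m < 1 := by exact_mod_cast hmlt
  omega
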